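/- arXiv:1804.09354 — 5 statements merged into one kernel-verified Lean document; each statement's English description precedes it below -/
import Mathlib

section
/- Let DMU_o = (x_o,y_o), o ∈ J, be FDH_V-efficient. Then Left-CRS prevails at DMU_o if and only if σ_o^- = 1. -/
open Set

noncomputable section

/-- The FDH variable-returns-to-scale technology:
`T = {(x,y) : y ≥ 0 and ∃ j, x_j ≤ x and y ≤ y_j}`. -/
def FDH {n m s : ℕ} (x : Fin n → Fin m → ℝ) (y : Fin n → Fin s → ℝ) :
    Set ((Fin m → ℝ) × (Fin s → ℝ)) :=
  {p | (∀ r, 0 ≤ p.2 r) ∧ ∃ j : Fin n, (∀ i, x j i ≤ p.1 i) ∧ (∀ r, p.2 r ≤ y j r)}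

/-- DMU_o is FDH_V-efficient: no (x,y) ∈ T with x ≤ x_o, y ≥ y_o, (x,y) ≠ (x_o,y_o). -/
def FDHEfficient {n m s : ℕ} (x : Fin n → Fin m → ℝ) (y : Fin n → Fin s → ℝ)
    (o : Fin n) : Prop :=
  ¬ ∃ p ∈ FDH x y, (∀ i, p.1 i ≤ x o i) ∧ (∀ r, y o r ≤ p.2 r) ∧ p ≠ (x o, y o)

/-- `α_{jo} = max_i x_{ij} / x_{io}`. -/
def alphaRatio {n m s : ℕ} (x : Fin n → Fin m → ℝ) (_y : Fin n → Fin s → ℝ)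
    (o j : Fin n) : ℝ :=
  ⨆ i : Fin m, x j i / x o i

/-- `β_{jo} = min_r y_{rj} / y_{ro}`. -/
def betaRatio {n m s : ℕ} (_x : Fin n → Fin m → ℝ) (y : Fin n → Fin s → ℝ)
    (o j : Fin n) : ℝ :=
  ⨅ r : Fin s, y j r / y o r

/-- `θ_o(D) = inf {θ : ∃ j ∈ J, δ ∈ D, δ x_j ≤ θ x_o, δ y_j ≥ y_o}`. -/
def thetaEff {n m s : ℕ} (x : Fin n → Fin m → ℝ) (y : Fin n → Fin s → ℝ)
    (o : Fin n) (D : Set ℝ) : ℝ :=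
  sInf {θ : ℝ | ∃ j : Fin n, ∃ δ ∈ D,
    (∀ i, δ * x j i ≤ θ * x o i) ∧ (∀ r, y o r ≤ δ * y j r)}

/-- G-IRS prevails at DMU_o iff `θ_o^{ND} > θ_o^{C} = θ_o^{NI}`. -/
def GIRS {n m s : ℕ} (x : Fin n → Fin m → ℝ) (y : Fin n → Fin s → ℝ)
    (o : Fin n) : Prop :=
  thetaEff x y o (Ici 1) > thetaEff x y o (Ici 0) ∧
    thetaEff x y o (Ici 0) = thetaEff x y o (Icc 0 1)

/-- G-DRS prevails at DMU_o iff `θ_o^{NI} > θ_o^{C} = θ_o^{ND}`. -/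
def GDRS {n m s : ℕ} (x : Fin n → Fin m → ℝ) (y : Fin n → Fin s → ℝ)
    (o : Fin n) : Prop :=
  thetaEff x y o (Icc 0 1) > thetaEff x y o (Ici 0) ∧
    thetaEff x y o (Ici 0) = thetaEff x y o (Ici 1)

/-- G-CRS prevails at DMU_o iff `θ_o^{C} = θ_o^{NI} = θ_o^{ND} = 1`. -/
def GCRS {n m s : ℕ} (x : Fin n → Fin m → ℝ) (y : Fin n → Fin s → ℝ)
    (o : Fin n) : Prop :=
  thetaEff x y o (Ici 0) = 1 ∧ thetaEff x y o (Icc 0 1) = 1 ∧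
    thetaEff x y o (Ici 1) = 1

/-- G-SCRS prevails at DMU_o iff `θ_o^{C} = θ_o^{NI} = θ_o^{ND} < 1`. -/
def GSCRS {n m s : ℕ} (x : Fin n → Fin m → ℝ) (y : Fin n → Fin s → ℝ)
    (o : Fin n) : Prop :=
  thetaEff x y o (Ici 0) = thetaEff x y o (Icc 0 1) ∧
    thetaEff x y o (Icc 0 1) = thetaEff x y o (Ici 1) ∧
    thetaEff x y o (Ici 1) < 1

/-- Response function `β_o(α) = sup {β : (α x_o, β y_o) ∈ T}`. -/
def respFun {n m s : ℕ} (x : Fin n → Fin m → ℝ) (y : Fin n → Fin s → ℝ)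
    (o : Fin n) (α : ℝ) : ℝ :=
  sSup {β : ℝ | ((fun i => α * x o i), (fun r => β * y o r)) ∈ FDH x y}

/-- Maximum incremental ratio `σ_o^+ = sup_{α > 1} (β_o(α) - 1)/(α - 1)`. -/
def sigmaPlus {n m s : ℕ} (x : Fin n → Fin m → ℝ) (y : Fin n → Fin s → ℝ)
    (o : Fin n) : ℝ :=
  sSup {ρ : ℝ | ∃ α : ℝ, 1 < α ∧ ρ = (respFun x y o α - 1) / (α - 1)}

/-- Minimum decremental ratio `σ_o^- = inf {(β_o(α)-1)/(α-1) : α < 1 feasible}`,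
taken in the extended reals (so it is `+∞` when no `α < 1` is feasible). -/
def sigmaMinus {n m s : ℕ} (x : Fin n → Fin m → ℝ) (y : Fin n → Fin s → ℝ)
    (o : Fin n) : EReal :=
  sInf {ρ : EReal | ∃ α : ℝ, α < 1 ∧
    (∃ β : ℝ, ((fun i => α * x o i), (fun r => β * y o r)) ∈ FDH x y) ∧
    ρ = (((respFun x y o α - 1) / (α - 1) : ℝ) : EReal)}

/-- Right-IRS: `(δ x_o, δ y_o) ∈ int T` for some `δ > 1`. -/
def RightIRS {n m s : ℕ} (x : Fin n → Fin m → ℝ) (y : Fin n → Fin s → ℝ)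
    (o : Fin n) : Prop :=
  ∃ δ : ℝ, 1 < δ ∧
    ((fun i => δ * x o i), (fun r => δ * y o r)) ∈ interior (FDH x y)

/-- Right-DRS: `(δ x_o, δ y_o) ∉ T` for every `δ > 1`. -/
def RightDRS {n m s : ℕ} (x : Fin n → Fin m → ℝ) (y : Fin n → Fin s → ℝ)
    (o : Fin n) : Prop :=
  ∀ δ : ℝ, 1 < δ →
    ((fun i => δ * x o i), (fun r => δ * y o r)) ∉ FDH x y

/-- Right-CRS: neither Right-IRS nor Right-DRS. -/
def RightCRS {n m s : ℕ} (x : Fin n → Fin m → ℝ) (y : Fin n → Fin s → ℝ)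
    (o : Fin n) : Prop :=
  ¬ RightIRS x y o ∧ ¬ RightDRS x y o

/-- Left-IRS: `(δ x_o, δ y_o) ∉ T` for every `δ ∈ (0,1)`. -/
def LeftIRS {n m s : ℕ} (x : Fin n → Fin m → ℝ) (y : Fin n → Fin s → ℝ)
    (o : Fin n) : Prop :=
  ∀ δ : ℝ, 0 < δ → δ < 1 →
    ((fun i => δ * x o i), (fun r => δ * y o r)) ∉ FDH x y

/-- Left-DRS: `(δ x_o, δ y_o) ∈ int T` for some `δ ∈ (0,1)`. -/
def LeftDRS {n m s : ℕ} (x : Fin n → Fin m → ℝ) (y : Fin n → Fin s → ℝ)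
    (o : Fin n) : Prop :=
  ∃ δ : ℝ, 0 < δ ∧ δ < 1 ∧
    ((fun i => δ * x o i), (fun r => δ * y o r)) ∈ interior (FDH x y)

/-- Left-CRS: neither Left-IRS nor Left-DRS. -/
def LeftCRS {n m s : ℕ} (x : Fin n → Fin m → ℝ) (y : Fin n → Fin s → ℝ)
    (o : Fin n) : Prop :=
  ¬ LeftIRS x y o ∧ ¬ LeftDRS x y o

/-! ### Auxiliary lemmas -/

lemma ratio_flip (a b : ℝ) : (a - 1) / (b - 1) = (1 - a) / (1 - b) := by
  rw [show a - 1 = -(1 - a) by ring, show b - 1 = -(1 - b) by ring, neg_div_neg_eq]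

lemma alpha_le_iff {n m s : ℕ} (hm : 0 < m) (x : Fin n → Fin m → ℝ) (y : Fin n → Fin s → ℝ)
    (hx : ∀ j i, 0 < x j i) (o j : Fin n) (α : ℝ) :
    (∀ i, x j i ≤ α * x o i) ↔ alphaRatio x y o j ≤ α := by
  haveI : Nonempty (Fin m) := ⟨⟨0, hm⟩⟩
  rw [alphaRatio, ciSup_le_iff (Set.finite_range _).bddAbove]
  constructor
  · intro h i; rw [div_le_iff₀ (hx o i)]; exact h i
  · intro h i; have := h i; rw [div_le_iff₀ (hx o i)] at this; exact this

lemma beta_le_iff {n m s : ℕ} (hs : 0 < s) (x : Fin n → Fin m → ℝ) (y : Fin n → Fin s → ℝ)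
    (hy : ∀ j r, 0 < y j r) (o j : Fin n) (β : ℝ) :
    (∀ r, β * y o r ≤ y j r) ↔ β ≤ betaRatio x y o j := by
  haveI : Nonempty (Fin s) := ⟨⟨0, hs⟩⟩
  rw [betaRatio, le_ciInf_iff (Set.finite_range _).bddBelow]
  constructor
  · intro h r; rw [le_div_iff₀ (hy o r)]; exact h r
  · intro h r; have := h r; rw [le_div_iff₀ (hy o r)] at this; exact this

lemma alpha_pos {n m s : ℕ} (hm : 0 < m) (x : Fin n → Fin m → ℝ) (y : Fin n → Fin s → ℝ)
    (hx : ∀ j i, 0 < x j i) (o j : Fin n) : 0 < alphaRatio x y o j := by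
  haveI : Nonempty (Fin m) := ⟨⟨0, hm⟩⟩
  have h := le_ciSup (f := fun i => x j i / x o i) (Set.finite_range _).bddAbove ⟨0, hm⟩
  exact lt_of_lt_of_le (div_pos (hx j ⟨0, hm⟩) (hx o ⟨0, hm⟩)) h

lemma beta_pos {n m s : ℕ} (hs : 0 < s) (x : Fin n → Fin m → ℝ) (y : Fin n → Fin s → ℝ)
    (hy : ∀ j r, 0 < y j r) (o j : Fin n) : 0 < betaRatio x y o j := by
  haveI : Nonempty (Fin s) := ⟨⟨0, hs⟩⟩
  obtain ⟨r0, hr0⟩ := exists_eq_ciInf_of_finite (f := fun r => y j r / y o r)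
  rw [betaRatio, ← hr0]
  exact div_pos (hy j r0) (hy o r0)

lemma mem_FDH_iff {n m s : ℕ} (hm : 0 < m) (hs : 0 < s)
    (x : Fin n → Fin m → ℝ) (y : Fin n → Fin s → ℝ)
    (hx : ∀ j i, 0 < x j i) (hy : ∀ j r, 0 < y j r) (o : Fin n) (α β : ℝ) :
    ((fun i => α * x o i), (fun r => β * y o r)) ∈ FDH x y ↔
      0 ≤ β ∧ ∃ j, alphaRatio x y o j ≤ α ∧ β ≤ betaRatio x y o j := by
  constructor
  · rintro ⟨h0, j, hxj, hyj⟩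
    refine ⟨?_, j, (alpha_le_iff hm x y hx o j α).mp hxj,
      (beta_le_iff hs x y hy o j β).mp hyj⟩
    have h1 : 0 ≤ β * y o ⟨0, hs⟩ := h0 ⟨0, hs⟩
    have h2 := hy o ⟨0, hs⟩
    nlinarith
  · rintro ⟨h0, j, ha, hb⟩
    exact ⟨fun r => mul_nonneg h0 (hy o r).le, j,
      (alpha_le_iff hm x y hx o j α).mpr ha, (beta_le_iff hs x y hy o j β).mpr hb⟩

lemma respFun_spec {n m s : ℕ} (hm : 0 < m) (hs : 0 < s)
    (x : Fin n → Fin m → ℝ) (y : Fin n → Fin s → ℝ)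
    (hx : ∀ j i, 0 < x j i) (hy : ∀ j r, 0 < y j r) (o : Fin n) {α : ℝ}
    (hfeas : ∃ j, alphaRatio x y o j ≤ α) :
    ∃ k, alphaRatio x y o k ≤ α ∧ respFun x y o α = betaRatio x y o k ∧
      ∀ j, alphaRatio x y o j ≤ α → betaRatio x y o j ≤ respFun x y o α := by
  classical
  obtain ⟨j0, hj0⟩ := hfeas
  set S := Finset.univ.filter (fun j => alphaRatio x y o j ≤ α) with hSdef
  have hS : S.Nonempty := ⟨j0, by simp [hSdef, hj0]⟩
  obtain ⟨k, hkS, hkM⟩ := Finset.exists_mem_eq_sup' hS (betaRatio x y o)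
  have hk : alphaRatio x y o k ≤ α := by
    have := hkS; rw [hSdef, Finset.mem_filter] at this; exact this.2
  have hgreat : IsGreatest
      {β : ℝ | ((fun i => α * x o i), (fun r => β * y o r)) ∈ FDH x y}
      (S.sup' hS (betaRatio x y o)) := by
    constructor
    · show _ ∈ FDH x y
      rw [mem_FDH_iff hm hs x y hx hy o]
      exact ⟨by rw [hkM]; exact (beta_pos hs x y hy o k).le, k, hk, le_of_eq hkM⟩
    · intro β hβ
      rw [Set.mem_setOf_eq, mem_FDH_iff hm hs x y hx hy o] at hβ
      obtain ⟨h0, j, ha, hb⟩ := hβ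
      exact hb.trans (Finset.le_sup' _ (by simp [hSdef, ha]))
  have hresp : respFun x y o α = S.sup' hS (betaRatio x y o) := hgreat.csSup_eq
  refine ⟨k, hk, by rw [hresp, hkM], fun j hj => ?_⟩
  rw [hresp]
  exact Finset.le_sup' _ (by simp [hSdef, hj])

lemma notLeftIRS_iff {n m s : ℕ} (hm : 0 < m) (hs : 0 < s)
    (x : Fin n → Fin m → ℝ) (y : Fin n → Fin s → ℝ)
    (hx : ∀ j i, 0 < x j i) (hy : ∀ j r, 0 < y j r) (o : Fin n) :
    ¬ LeftIRS x y o ↔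
      ∃ j, alphaRatio x y o j < 1 ∧ alphaRatio x y o j ≤ betaRatio x y o j := by
  rw [LeftIRS]
  push_neg
  constructor
  · rintro ⟨δ, hδ0, hδ1, hmem⟩
    rw [mem_FDH_iff hm hs x y hx hy o] at hmem
    obtain ⟨_, j, ha, hb⟩ := hmem
    exact ⟨j, ha.trans_lt hδ1, ha.trans hb⟩
  · rintro ⟨j, h1, h2⟩
    exact ⟨alphaRatio x y o j, alpha_pos hm x y hx o j, h1,
      (mem_FDH_iff hm hs x y hx hy o _ _).mpr
        ⟨(alpha_pos hm x y hx o j).le, j, le_rfl, h2⟩⟩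

lemma leftDRS_iff {n m s : ℕ} (hm : 0 < m) (hs : 0 < s)
    (x : Fin n → Fin m → ℝ) (y : Fin n → Fin s → ℝ)
    (hx : ∀ j i, 0 < x j i) (hy : ∀ j r, 0 < y j r) (o : Fin n) :
    LeftDRS x y o ↔
      ∃ j, alphaRatio x y o j < 1 ∧ alphaRatio x y o j < betaRatio x y o j := by
  constructor
  · rintro ⟨δ, hδ0, hδ1, hint⟩
    set f : ℝ → (Fin m → ℝ) × (Fin s → ℝ) :=
      fun t => ((fun i => (δ - t) * x o i), (fun r => (δ + t) * y o r)) with hf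
    have hcont : Continuous f := by
      refine Continuous.prodMk ?_ ?_
      · exact continuous_pi fun i => (continuous_const.sub continuous_id).mul continuous_const
      · exact continuous_pi fun r => (continuous_const.add continuous_id).mul continuous_const
    have h0 : f 0 ∈ interior (FDH x y) := by
      have : f 0 = ((fun i => δ * x o i), (fun r => δ * y o r)) := by
        rw [hf]; simp
      rw [this]; exact hint
    have hopen : IsOpen (f ⁻¹' interior (FDH x y)) := isOpen_interior.preimage hcont
    obtain ⟨ε, hε, hball⟩ := Metric.isOpen_iff.mp hopen 0 h0
    have hballmem : (ε/2 : ℝ) ∈ Metric.ball (0 : ℝ) ε := by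
      rw [Metric.mem_ball, Real.dist_eq, sub_zero, abs_of_pos (half_pos hε)]
      exact half_lt_self hε
    have ht : f (ε/2) ∈ FDH x y := interior_subset (hball hballmem)
    obtain ⟨_, j, hxj, hyj⟩ := ht
    have ha : alphaRatio x y o j ≤ δ - ε/2 :=
      (alpha_le_iff hm x y hx o j _).mp hxj
    have hb : δ + ε/2 ≤ betaRatio x y o j :=
      (beta_le_iff hs x y hy o j _).mp hyj
    refine ⟨j, ?_, ?_⟩ <;> [skip; skip]
    · have : 0 < ε/2 := half_pos hε
      linarith
    · have : 0 < ε/2 := half_pos hε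
      linarith
  · rintro ⟨j, h1, h2⟩
    have hap := alpha_pos hm x y hx o j
    set a := alphaRatio x y o j with ha
    set b := betaRatio x y o j with hb
    set δ := (a + min 1 b) / 2 with hδ
    have hamin : a < min 1 b := lt_min h1 h2
    have hδa : a < δ := by rw [hδ]; linarith
    have hδmin : δ < min 1 b := by rw [hδ]; linarith
    have hδ1 : δ < 1 := hδmin.trans_le (min_le_left _ _)
    have hδb : δ < b := hδmin.trans_le (min_le_right _ _)
    have hδ0 : 0 < δ := hap.trans hδa
    refine ⟨δ, hδ0, hδ1, ?_⟩
    rw [mem_interior]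
    refine ⟨{q : (Fin m → ℝ) × (Fin s → ℝ) |
      (∀ i, x j i < q.1 i) ∧ ∀ r, 0 < q.2 r ∧ q.2 r < y j r}, ?_, ?_, ?_⟩
    · rintro q ⟨hq1, hq2⟩
      exact ⟨fun r => (hq2 r).1.le, j, fun i => (hq1 i).le, fun r => (hq2 r).2.le⟩
    · have heq : {q : (Fin m → ℝ) × (Fin s → ℝ) |
          (∀ i, x j i < q.1 i) ∧ ∀ r, 0 < q.2 r ∧ q.2 r < y j r}
          = (⋂ i, {q : (Fin m → ℝ) × (Fin s → ℝ) | x j i < q.1 i}) ∩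
            ⋂ r, ({q : (Fin m → ℝ) × (Fin s → ℝ) | 0 < q.2 r} ∩
              {q : (Fin m → ℝ) × (Fin s → ℝ) | q.2 r < y j r}) := by
        ext q
        simp only [Set.mem_setOf_eq, Set.mem_inter_iff, Set.mem_iInter, forall_and]
      rw [heq]
      refine IsOpen.inter (isOpen_iInter_of_finite fun i => ?_)
        (isOpen_iInter_of_finite fun r => IsOpen.inter ?_ ?_)
      · exact isOpen_lt continuous_const ((continuous_apply i).comp continuous_fst)
      · exact isOpen_lt continuous_const ((continuous_apply r).comp continuous_snd)
      · exact isOpen_lt ((continuous_apply r).comp continuous_snd) continuous_const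
    · constructor
      · intro i
        have h := (alpha_le_iff hm x y hx o j a).mpr le_rfl i
        calc x j i ≤ a * x o i := h
          _ < δ * x o i := mul_lt_mul_of_pos_right hδa (hx o i)
      · intro r
        refine ⟨mul_pos hδ0 (hy o r), ?_⟩
        have h := (beta_le_iff hs x y hy o j b).mpr le_rfl r
        calc δ * y o r < b * y o r := mul_lt_mul_of_pos_right hδb (hy o r)
          _ ≤ y j r := h

/-- Left-CRS at the FDH_V-efficient DMU_o iff `σ_o^- = 1`. -/
theorem stmt15 {n m s : ℕ} (hm : 0 < m) (hs : 0 < s)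
    (x : Fin n → Fin m → ℝ) (y : Fin n → Fin s → ℝ)
    (hx : ∀ j i, 0 < x j i) (hy : ∀ j r, 0 < y j r)
    (o : Fin n) (heff : FDHEfficient x y o) :
    LeftCRS x y o ↔ sigmaMinus x y o = (1 : EReal) := by
  classical
  have memIff := mem_FDH_iff hm hs x y hx hy o
  have hIRS := notLeftIRS_iff hm hs x y hx hy o
  have hDRS := leftDRS_iff hm hs x y hx hy o
  rw [LeftCRS, sigmaMinus]
  constructor
  · rintro ⟨hnIRS, hnDRS⟩
    obtain ⟨j, hj1, hjab⟩ := hIRS.mp hnIRS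
    have hnd : ∀ k, alphaRatio x y o k < 1 → betaRatio x y o k ≤ alphaRatio x y o k := by
      intro k hk
      by_contra h
      exact hnDRS (hDRS.mpr ⟨k, hk, lt_of_not_ge h⟩)
    have hje : betaRatio x y o j = alphaRatio x y o j := le_antisymm (hnd j hj1) hjab
    have hlb : ∀ ρ ∈ {ρ : EReal | ∃ α : ℝ, α < 1 ∧
        (∃ β : ℝ, ((fun i => α * x o i), (fun r => β * y o r)) ∈ FDH x y) ∧
        ρ = (((respFun x y o α - 1) / (α - 1) : ℝ) : EReal)}, (1 : EReal) ≤ ρ := by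
      rintro ρ ⟨α, hα1, ⟨β, hβmem⟩, rfl⟩
      obtain ⟨_, k0, hk0, _⟩ := (memIff α β).mp hβmem
      obtain ⟨k, hkα, hFk, _⟩ := respFun_spec hm hs x y hx hy o ⟨k0, hk0⟩
      have hFle : respFun x y o α ≤ α := by
        rw [hFk]
        exact (hnd k (hkα.trans_lt hα1)).trans hkα
      rw [← EReal.coe_one, EReal.coe_le_coe_iff, ratio_flip,
        le_div_iff₀ (by linarith : (0:ℝ) < 1 - α), one_mul]
      linarith
    have hub : (1 : EReal) ∈ {ρ : EReal | ∃ α : ℝ, α < 1 ∧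
        (∃ β : ℝ, ((fun i => α * x o i), (fun r => β * y o r)) ∈ FDH x y) ∧
        ρ = (((respFun x y o α - 1) / (α - 1) : ℝ) : EReal)} := by
      refine ⟨alphaRatio x y o j, hj1,
        ⟨alphaRatio x y o j, (memIff _ _).mpr
          ⟨(alpha_pos hm x y hx o j).le, j, le_rfl, hje.ge⟩⟩, ?_⟩
      obtain ⟨k, hkα, hFk, hall⟩ := respFun_spec hm hs x y hx hy o ⟨j, le_rfl⟩
      have h1 : respFun x y o (alphaRatio x y o j) ≤ alphaRatio x y o j := by
        rw [hFk]; exact (hnd k (hkα.trans_lt hj1)).trans hkα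
      have h2 : alphaRatio x y o j ≤ respFun x y o (alphaRatio x y o j) :=
        hje ▸ hall j le_rfl
      rw [le_antisymm h1 h2, div_self (by linarith : alphaRatio x y o j - 1 ≠ 0),
        EReal.coe_one]
    exact le_antisymm (sInf_le hub) (le_sInf hlb)
  · intro hσ
    have hne : ∃ j0, alphaRatio x y o j0 < 1 := by
      by_contra h
      push_neg at h
      have hempty : {ρ : EReal | ∃ α : ℝ, α < 1 ∧
          (∃ β : ℝ, ((fun i => α * x o i), (fun r => β * y o r)) ∈ FDH x y) ∧
          ρ = (((respFun x y o α - 1) / (α - 1) : ℝ) : EReal)} = ∅ := by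
        ext ρ
        simp only [Set.mem_setOf_eq, Set.mem_empty_iff_false, iff_false]
        rintro ⟨α, hα1, ⟨β, hβmem⟩, _⟩
        obtain ⟨_, k0, hk0, _⟩ := (memIff α β).mp hβmem
        exact absurd (lt_of_le_of_lt hk0 hα1) (not_lt.mpr (h k0))
      rw [hempty, sInf_empty] at hσ
      exact EReal.coe_ne_top 1 (EReal.coe_one ▸ hσ.symm)
    obtain ⟨j0, hj0'⟩ := hne
    have hnDRS : ¬ LeftDRS x y o := by
      intro hd
      obtain ⟨j, hj1, hjb⟩ := hDRS.mp hd
      obtain ⟨k, hkα, hFk, hall⟩ := respFun_spec hm hs x y hx hy o ⟨j, le_rfl⟩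
      have hF : alphaRatio x y o j < respFun x y o (alphaRatio x y o j) :=
        lt_of_lt_of_le hjb (hall j le_rfl)
      have hmem : (((respFun x y o (alphaRatio x y o j) - 1) /
          (alphaRatio x y o j - 1) : ℝ) : EReal) ∈ {ρ : EReal | ∃ α : ℝ, α < 1 ∧
          (∃ β : ℝ, ((fun i => α * x o i), (fun r => β * y o r)) ∈ FDH x y) ∧
          ρ = (((respFun x y o α - 1) / (α - 1) : ℝ) : EReal)} :=
        ⟨alphaRatio x y o j, hj1,
          ⟨alphaRatio x y o j, (memIff _ _).mpr
            ⟨(alpha_pos hm x y hx o j).le, j, le_rfl, hjb.le⟩⟩, rfl⟩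
      have hlt : (((respFun x y o (alphaRatio x y o j) - 1) /
          (alphaRatio x y o j - 1) : ℝ) : EReal) < 1 := by
        rw [← EReal.coe_one, EReal.coe_lt_coe_iff, ratio_flip,
          div_lt_one (by linarith : (0:ℝ) < 1 - alphaRatio x y o j)]
        linarith
      have := sInf_le hmem
      rw [hσ] at this
      exact absurd (this.trans_lt hlt) (lt_irrefl _)
    have hnd : ∀ k, alphaRatio x y o k < 1 → betaRatio x y o k ≤ alphaRatio x y o k := by
      intro k hk
      by_contra h
      exact hnDRS (hDRS.mpr ⟨k, hk, lt_of_not_ge h⟩)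
    have hnIRS : ¬ LeftIRS x y o := by
      by_contra hirs
      have hba : ∀ k, alphaRatio x y o k < 1 → betaRatio x y o k < alphaRatio x y o k := by
        intro k hk
        rcases lt_or_ge (betaRatio x y o k) (alphaRatio x y o k) with h | h
        · exact h
        · exact absurd hirs (hIRS.mpr ⟨k, hk, h⟩)
      set S1 := Finset.univ.filter (fun k => alphaRatio x y o k < 1) with hS1
      have hS1ne : S1.Nonempty := ⟨j0, by simp [hS1, hj0']⟩
      set c := S1.inf' hS1ne
        (fun k => (1 - betaRatio x y o k) / (1 - alphaRatio x y o k)) with hc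
      have hc1 : (1:ℝ) < c := by
        rw [hc, Finset.lt_inf'_iff]
        intro k hk
        have hk1 : alphaRatio x y o k < 1 := by
          rw [hS1, Finset.mem_filter] at hk; exact hk.2
        rw [lt_div_iff₀ (by linarith : (0:ℝ) < 1 - alphaRatio x y o k), one_mul]
        have := hba k hk1
        linarith
      have hcb : ∀ ρ ∈ {ρ : EReal | ∃ α : ℝ, α < 1 ∧
          (∃ β : ℝ, ((fun i => α * x o i), (fun r => β * y o r)) ∈ FDH x y) ∧
          ρ = (((respFun x y o α - 1) / (α - 1) : ℝ) : EReal)}, ((c:ℝ) : EReal) ≤ ρ := by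
        rintro ρ ⟨α, hα1, ⟨β, hβmem⟩, rfl⟩
        obtain ⟨_, k0, hk0, _⟩ := (memIff α β).mp hβmem
        obtain ⟨k, hkα, hFk, _⟩ := respFun_spec hm hs x y hx hy o ⟨k0, hk0⟩
        have hk1 : alphaRatio x y o k < 1 := hkα.trans_lt hα1
        have hbk := hba k hk1
        rw [EReal.coe_le_coe_iff, ratio_flip, hFk]
        calc c ≤ (1 - betaRatio x y o k) / (1 - alphaRatio x y o k) :=
              Finset.inf'_le _ (by simp [hS1, hk1])
          _ ≤ (1 - betaRatio x y o k) / (1 - α) := by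
              apply div_le_div_of_nonneg_left (by linarith) (by linarith) (by linarith)
      have hcle : ((c:ℝ) : EReal) ≤ 1 := by
        rw [← hσ]; exact le_sInf hcb
      rw [← EReal.coe_one, EReal.coe_le_coe_iff] at hcle
      linarith
    exact ⟨hnIRS, hnDRS⟩
end
end

section
/- Let DMU_o = (x_o,y_o), o ∈ J, be FDH_V-efficient. If G-IRS prevails at DMU_o, then Right-IRS prevails at DMU_o, i.e., there exists δ > 1 with (δ·x_o, δ·y_o) in the interior of T. -/
open Set

noncomputable section

/-- if G-IRS prevails at the FDH_V-efficient DMU_o, then Right-IRS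
prevails at it: there is `δ > 1` with `(δ x_o, δ y_o) ∈ int T`. -/
theorem stmt16 {n m s : ℕ} (hm : 0 < m) (hs : 0 < s)
    (x : Fin n → Fin m → ℝ) (y : Fin n → Fin s → ℝ)
    (hx : ∀ j i, 0 < x j i) (hy : ∀ j r, 0 < y j r)
    (o : Fin n) (heff : FDHEfficient x y o) (hgirs : GIRS x y o) :
    ∃ δ : ℝ, 1 < δ ∧
      ((fun i => δ * x o i), (fun r => δ * y o r)) ∈ interior (FDH x y) := by
  obtain ⟨hlt, heq⟩ := hgirs
  set i0 : Fin m := ⟨0, hm⟩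
  set r0 : Fin s := ⟨0, hs⟩
  -- θ^{ND} ≤ 1
  have hbdd : BddBelow {θ : ℝ | ∃ j : Fin n, ∃ δ ∈ Ici (1:ℝ),
      (∀ i, δ * x j i ≤ θ * x o i) ∧ (∀ r, y o r ≤ δ * y j r)} := by
    refine ⟨0, ?_⟩
    rintro θ ⟨j, δ, hδ, h1, h2⟩
    have := h1 i0
    have h1d : (1:ℝ) ≤ δ := hδ
    nlinarith [hx j i0, hx o i0]
  have hmem1 : (1:ℝ) ∈ {θ : ℝ | ∃ j : Fin n, ∃ δ ∈ Ici (1:ℝ),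
      (∀ i, δ * x j i ≤ θ * x o i) ∧ (∀ r, y o r ≤ δ * y j r)} :=
    ⟨o, 1, by norm_num, fun i => le_refl _, fun r => by simp⟩
  have hND_le : thetaEff x y o (Ici 1) ≤ 1 := csInf_le hbdd hmem1
  have hNI_lt : thetaEff x y o (Icc 0 1) < 1 := by
    have : thetaEff x y o (Ici 0) < 1 := lt_of_lt_of_le hlt hND_le
    rw [← heq]; exact this
  have hne : Set.Nonempty {θ : ℝ | ∃ j : Fin n, ∃ δ ∈ Icc (0:ℝ) 1,
      (∀ i, δ * x j i ≤ θ * x o i) ∧ (∀ r, y o r ≤ δ * y j r)} :=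
    ⟨1, o, 1, ⟨by norm_num, le_refl 1⟩, fun i => le_refl _, fun r => by simp⟩
  obtain ⟨θ, hθmem, hθ1⟩ := exists_lt_of_csInf_lt hne hNI_lt
  obtain ⟨j, δ, ⟨hδ0, hδ1⟩, hxc, hyc⟩ := hθmem
  have hδpos : 0 < δ := by
    have := hyc r0
    nlinarith [hy o r0, hy j r0]
  rcases lt_or_eq_of_le hδ1 with hδlt | hδeq
  · -- δ < 1 : pick t between max 1 (θ/δ) and 1/δ
    set t : ℝ := (max 1 (θ/δ) + 1/δ)/2 with ht_def
    have h1d : 1 < 1/δ := one_lt_one_div hδpos hδlt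
    have hθd : θ/δ < 1/δ := by gcongr
    have hmaxlt : max 1 (θ/δ) < 1/δ := max_lt h1d hθd
    have ht1 : 1 < t := by
      have : (1:ℝ) ≤ max 1 (θ/δ) := le_max_left _ _
      rw [ht_def]; linarith
    have htd : t * δ < 1 := by
      have : t < 1/δ := by rw [ht_def]; linarith
      calc t * δ < (1/δ) * δ := by nlinarith
        _ = 1 := by field_simp
    have htθ : θ < t * δ := by
      have : θ/δ < t := lt_of_le_of_lt (le_max_right _ _) (by rw [ht_def]; linarith)
      calc θ = (θ/δ) * δ := by field_simp
        _ < t * δ := by nlinarith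
    refine ⟨t, ht1, ?_⟩
    refine mem_interior.mpr ⟨{p : (Fin m → ℝ) × (Fin s → ℝ) |
        (∀ i, x j i < p.1 i) ∧ ∀ r, 0 < p.2 r ∧ p.2 r < y j r}, ?_, ?_, ?_, ?_⟩
    · rintro p ⟨h1, h2⟩
      exact ⟨fun r => (h2 r).1.le, j, fun i => (h1 i).le, fun r => (h2 r).2.le⟩
    · have h1 : IsOpen {p : (Fin m → ℝ) × (Fin s → ℝ) | ∀ i, x j i < p.1 i} := by
        rw [setOf_forall]
        exact isOpen_iInter_of_finite fun i =>
          isOpen_lt continuous_const ((continuous_apply i).comp continuous_fst)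
      have h2 : IsOpen {p : (Fin m → ℝ) × (Fin s → ℝ) |
          ∀ r, 0 < p.2 r ∧ p.2 r < y j r} := by
        rw [setOf_forall]
        exact isOpen_iInter_of_finite fun r =>
          (isOpen_lt continuous_const ((continuous_apply r).comp continuous_snd)).inter
            (isOpen_lt ((continuous_apply r).comp continuous_snd) continuous_const)
      exact h1.inter h2
    · intro i
      show x j i < t * x o i
      have h1 := hxc i
      have h2 := hx o i
      nlinarith [mul_pos (sub_pos.mpr htθ) (hx o i)]
    · intro r
      have h := hyc r
      have h2 := hy o r
      have h3 := hy j r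
      refine ⟨by show (0:ℝ) < t * y o r; positivity, ?_⟩
      show t * y o r < y j r
      nlinarith [mul_nonneg (by linarith : (0:ℝ) ≤ t) (by linarith : (0:ℝ) ≤ δ * y j r - y o r),
        mul_pos (sub_pos.mpr htd) (hy j r)]
  · -- δ = 1 : contradiction with efficiency
    exfalso
    subst hδeq
    apply heff
    refine ⟨(fun i => x j i, fun r => y o r), ⟨fun r => (hy o r).le, j,
      fun i => le_refl _, fun r => by have := hyc r; linarith⟩, ?_, fun r => le_refl _, ?_⟩
    · intro i
      have := hxc i
      have := hx o i
      nlinarith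
    · intro hpe
      have h := congrFun (congrArg Prod.fst hpe) i0
      simp only at h
      have h1 := hxc i0
      have h2 := hx o i0
      rw [h] at h1
      nlinarith
end
end

section
/- Let DMU_o = (x_o,y_o), o ∈ J, be FDH_V-efficient. If G-DRS prevails at DMU_o, then Left-DRS prevails at DMU_o, i.e., there exists δ ∈ (0,1) with (δ·x_o, δ·y_o) in the interior of T. -/
open Set

noncomputable section

/-- if G-DRS prevails at the FDH_V-efficient DMU_o, then Left-DRS
prevails at it: there is `δ ∈ (0,1)` with `(δ x_o, δ y_o) ∈ int T`. -/
theorem stmt17 {n m s : ℕ} (hm : 0 < m) (hs : 0 < s)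
    (x : Fin n → Fin m → ℝ) (y : Fin n → Fin s → ℝ)
    (hx : ∀ j i, 0 < x j i) (hy : ∀ j r, 0 < y j r)
    (o : Fin n) (heff : FDHEfficient x y o) (hgdrs : GDRS x y o) :
    ∃ δ : ℝ, 0 < δ ∧ δ < 1 ∧
      ((fun i => δ * x o i), (fun r => δ * y o r)) ∈ interior (FDH x y) := by
  classical
  set SNI := {θ : ℝ | ∃ j : Fin n, ∃ δ ∈ Icc (0:ℝ) 1,
    (∀ i, δ * x j i ≤ θ * x o i) ∧ (∀ r, y o r ≤ δ * y j r)} with hSNI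
  set SND := {θ : ℝ | ∃ j : Fin n, ∃ δ ∈ Ici (1:ℝ),
    (∀ i, δ * x j i ≤ θ * x o i) ∧ (∀ r, y o r ≤ δ * y j r)} with hSND
  have hposND : ∀ θ ∈ SND, (0:ℝ) < θ := by
    intro θ hθ
    obtain ⟨j, δ, hδ, h1, h2⟩ := hθ
    have hδ0 : (0:ℝ) < δ := lt_of_lt_of_le one_pos hδ
    have hxp : 0 < δ * x j ⟨0, hm⟩ := mul_pos hδ0 (hx j _)
    have h3 := lt_of_lt_of_le hxp (h1 ⟨0, hm⟩)
    nlinarith [hx o (⟨0, hm⟩ : Fin m)]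
  have hbddND : BddBelow SND := ⟨0, fun θ hθ => (hposND θ hθ).le⟩
  have h1NI : (1:ℝ) ∈ SNI :=
    ⟨o, 1, ⟨zero_le_one, le_refl 1⟩, fun i => le_refl _, fun r => (one_mul _).symm.le⟩
  have hbddNI : BddBelow SNI := by
    refine ⟨0, fun θ hθ => ?_⟩
    obtain ⟨j, δ, hδ, h1, h2⟩ := hθ
    have hyp : 0 < y o ⟨0, hs⟩ := hy o _
    have hδ0 : (0:ℝ) < δ := by
      rcases lt_or_ge 0 δ with h | h
      · exact h
      · exfalso
        have := lt_of_lt_of_le hyp (h2 ⟨0, hs⟩)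
        nlinarith [hy j (⟨0, hs⟩ : Fin s)]
    have hxp : 0 < δ * x j ⟨0, hm⟩ := mul_pos hδ0 (hx j _)
    have h3 := lt_of_lt_of_le hxp (h1 ⟨0, hm⟩)
    nlinarith [hx o (⟨0, hm⟩ : Fin m)]
  have hNIle1 : sInf SNI ≤ 1 := csInf_le hbddNI h1NI
  have hlt : sInf SND < sInf SNI := by
    have h1 := hgdrs.1
    have h2 := hgdrs.2
    unfold thetaEff at h1 h2
    rw [← hSNI, ← hSND] at *
    rw [← h2]; exact h1
  have h1ND : (1:ℝ) ∈ SND :=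
    ⟨o, 1, mem_Ici.mpr (le_refl 1), fun i => le_refl _, fun r => (one_mul _).symm.le⟩
  obtain ⟨θ, hθmem, hθlt⟩ := exists_lt_of_csInf_lt ⟨1, h1ND⟩ hlt
  obtain ⟨j, δ, hδ1, hxj, hyj⟩ := hθmem
  have hθpos : 0 < θ := hposND θ ⟨j, δ, hδ1, hxj, hyj⟩
  have hθlt1 : θ < 1 := lt_of_lt_of_le hθlt hNIle1
  have hδgt1 : 1 < δ := by
    rcases lt_or_eq_of_le (mem_Ici.mp hδ1) with h | h
    · exact h
    · exfalso
      have : θ ∈ SNI := ⟨j, δ, ⟨by linarith, h.ge⟩, hxj, hyj⟩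
      exact absurd (csInf_le hbddNI this) (not_le.mpr hθlt)
  have hδ0 : (0:ℝ) < δ := by linarith
  set d : ℝ := (θ + 1) / (2 * δ) with hd
  have hd0 : 0 < d := by positivity
  have hd1 : d < 1 := by
    rw [hd, div_lt_one (by linarith)]; linarith
  refine ⟨d, hd0, hd1, ?_⟩
  -- the open set
  set U := {p : (Fin m → ℝ) × (Fin s → ℝ) |
    (∀ i, x j i < p.1 i) ∧ ∀ r, 0 < p.2 r ∧ p.2 r < y j r} with hU
  have hUopen : IsOpen U := by
    have e : U = (⋂ i, {p : (Fin m → ℝ) × (Fin s → ℝ) | x j i < p.1 i}) ∩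
        ((⋂ r, {p : (Fin m → ℝ) × (Fin s → ℝ) | 0 < p.2 r}) ∩
         (⋂ r, {p : (Fin m → ℝ) × (Fin s → ℝ) | p.2 r < y j r})) := by
      ext p
      simp only [hU, mem_setOf_eq, mem_inter_iff, mem_iInter]
      exact ⟨fun h => ⟨h.1, fun r => (h.2 r).1, fun r => (h.2 r).2⟩,
        fun h => ⟨h.1, fun r => ⟨h.2.1 r, h.2.2 r⟩⟩⟩
    rw [e]
    refine IsOpen.inter (isOpen_iInter_of_finite fun i => ?_)
      (IsOpen.inter (isOpen_iInter_of_finite fun r => ?_)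
        (isOpen_iInter_of_finite fun r => ?_))
    · exact isOpen_lt continuous_const ((continuous_apply i).comp continuous_fst)
    · exact isOpen_lt continuous_const ((continuous_apply r).comp continuous_snd)
    · exact isOpen_lt ((continuous_apply r).comp continuous_snd) continuous_const
  have hUsub : U ⊆ FDH x y := by
    intro p hp
    exact ⟨fun r => (hp.2 r).1.le, j, fun i => (hp.1 i).le, fun r => (hp.2 r).2.le⟩
  have hmem : ((fun i => d * x o i), (fun r => d * y o r)) ∈ U := by
    constructor
    · intro i
      have h1 : δ * x j i ≤ θ * x o i := hxj i
      have h2 : θ * x o i < (2 * δ * d) / 2 * x o i := by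
        have : 2 * δ * d = θ + 1 := by
          rw [hd]; field_simp
        rw [this]
        have := hx o i
        nlinarith
      have h3 : (2 * δ * d) / 2 * x o i = δ * (d * x o i) := by ring
      have := lt_of_le_of_lt h1 (h2.trans_eq h3)
      exact lt_of_mul_lt_mul_left (by simpa using this) hδ0.le
    · intro r
      refine ⟨mul_pos hd0 (hy o r), ?_⟩
      have h1 : y o r ≤ δ * y j r := hyj r
      have h2 : d * y o r ≤ d * (δ * y j r) := by nlinarith [hy o r, hy j r]
      have h3 : d * (δ * y j r) < y j r := by
        have hdδ : d * δ < 1 := by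
          rw [hd]; rw [div_mul_eq_mul_div, div_lt_one (by linarith)]; nlinarith
        nlinarith [hy j r]
      exact lt_of_le_of_lt h2 h3
  exact mem_interior.mpr ⟨U, hUsub, hUopen, hmem⟩
end
end

section
/- Let DMU_o = (x_o,y_o), o ∈ J, be FDH_V-efficient. If G-CRS prevails at DMU_o, then Right-IRS does not prevail at DMU_o and Left-DRS does not prevail at DMU_o; that is, (δ·x_o, δ·y_o) is not in the interior of T for any δ > 1 and (δ·x_o, δ·y_o) is not in the interior of T for any δ ∈ (0,1). -/
open Set

noncomputable section

lemma thetaC_lt_one_of_interior {n m s : ℕ} (hm : 0 < m) (hs : 0 < s)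
    (x : Fin n → Fin m → ℝ) (y : Fin n → Fin s → ℝ)
    (hx : ∀ j i, 0 < x j i) (hy : ∀ j r, 0 < y j r) (o : Fin n) (δ : ℝ) (hδ : 0 < δ)
    (hin : ((fun i => δ * x o i), (fun r => δ * y o r)) ∈ interior (FDH x y)) :
    thetaEff x y o (Ici 0) < 1 := by
  set f : ℝ → (Fin m → ℝ) × (Fin s → ℝ) :=
    fun ε => ((fun i => (δ - ε) * x o i), (fun r => (δ + ε) * y o r)) with hf
  have hcont : Continuous f := by
    apply Continuous.prodMk <;> exact continuous_pi fun i => by fun_prop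
  have htend : Filter.Tendsto f (nhds 0) (nhds (((fun i => δ * x o i), (fun r => δ * y o r)))) := by
    have := hcont.tendsto 0
    simpa [hf] using this
  have hev : ∀ᶠ ε : ℝ in nhds 0, f ε ∈ interior (FDH x y) :=
    htend.eventually (isOpen_interior.mem_nhds hin)
  have h2 : ∀ᶠ ε : ℝ in nhds 0, ε < δ := by
    exact Filter.Tendsto.eventually_lt_const hδ Filter.tendsto_id
  obtain ⟨ε, ⟨hmemI, hεδ⟩, hεpos⟩ :=
    ((((hev.and h2).filter_mono (nhdsWithin_le_nhds (s := Ioi 0)))).and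
      eventually_mem_nhdsWithin).exists
  have hεpos : (0 : ℝ) < ε := hεpos
  have hmem : f ε ∈ FDH x y := interior_subset hmemI
  obtain ⟨-, j, hxj, hyj⟩ := hmem
  have hδε : (0 : ℝ) < δ + ε := by linarith
  have hθmem : (δ - ε) / (δ + ε) ∈ {θ : ℝ | ∃ j : Fin n, ∃ δ' ∈ Ici (0 : ℝ),
      (∀ i, δ' * x j i ≤ θ * x o i) ∧ (∀ r, y o r ≤ δ' * y j r)} := by
    refine ⟨j, (δ + ε)⁻¹, by rw [mem_Ici]; positivity, fun i => ?_, fun r => ?_⟩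
    · have := hxj i
      simp only [hf] at this
      rw [div_mul_eq_mul_div, le_div_iff₀ hδε, inv_mul_eq_div, div_mul_eq_mul_div,
        div_le_iff₀ hδε]
      nlinarith [this]
    · have := hyj r
      simp only [hf] at this
      rw [inv_mul_eq_div, le_div_iff₀ hδε]
      nlinarith [this]
  have hbdd : BddBelow {θ : ℝ | ∃ j : Fin n, ∃ δ' ∈ Ici (0 : ℝ),
      (∀ i, δ' * x j i ≤ θ * x o i) ∧ (∀ r, y o r ≤ δ' * y j r)} := by
    refine ⟨0, fun θ hθ => ?_⟩
    obtain ⟨k, δ', hδ'0, hxk, hyk⟩ := hθ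
    have hy0 := hyk ⟨0, hs⟩
    have hδ'pos : 0 < δ' := by
      by_contra h
      push_neg at h
      have : δ' * y k ⟨0, hs⟩ ≤ 0 := mul_nonpos_of_nonpos_of_nonneg h (hy k ⟨0, hs⟩).le
      nlinarith [hy o ⟨0, hs⟩]
    have hx0 := hxk ⟨0, hm⟩
    nlinarith [hx k ⟨0, hm⟩, hx o ⟨0, hm⟩, mul_pos hδ'pos (hx k ⟨0, hm⟩)]
  calc thetaEff x y o (Ici 0) ≤ (δ - ε) / (δ + ε) := csInf_le hbdd hθmem
    _ < 1 := by rw [div_lt_one hδε]; linarith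

/-- if G-CRS prevails at the FDH_V-efficient DMU_o, then neither
Right-IRS nor Left-DRS prevails at it. -/
theorem stmt18 {n m s : ℕ} (hm : 0 < m) (hs : 0 < s)
    (x : Fin n → Fin m → ℝ) (y : Fin n → Fin s → ℝ)
    (hx : ∀ j i, 0 < x j i) (hy : ∀ j r, 0 < y j r)
    (o : Fin n) (heff : FDHEfficient x y o) (hgcrs : GCRS x y o) :
    (∀ δ : ℝ, 1 < δ →
      ((fun i => δ * x o i), (fun r => δ * y o r)) ∉ interior (FDH x y)) ∧
    (∀ δ : ℝ, 0 < δ → δ < 1 →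
      ((fun i => δ * x o i), (fun r => δ * y o r)) ∉ interior (FDH x y)) := by
  constructor
  · intro δ hδ hin
    have := thetaC_lt_one_of_interior hm hs x y hx hy o δ (by linarith) hin
    rw [hgcrs.1] at this
    exact lt_irrefl 1 this
  · intro δ hδ0 _ hin
    have := thetaC_lt_one_of_interior hm hs x y hx hy o δ hδ0 hin
    rw [hgcrs.1] at this
    exact lt_irrefl 1 this
end
end

section
/- Let DMU_o = (x_o,y_o), o ∈ J, be FDH_V-efficient. If G-SCRS prevails at DMU_o, then both Right-IRS and Left-DRS prevail at DMU_o; that is, there exist δ_1 > 1 and δ_2 ∈ (0,1) such that (δ_1·x_o, δ_1·y_o) and (δ_2·x_o, δ_2·y_o) both lie in the interior of T. -/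
open Set

noncomputable section

lemma mem_interior_FDH' {n m s : ℕ} (x : Fin n → Fin m → ℝ) (y : Fin n → Fin s → ℝ)
    (j : Fin n) (p : (Fin m → ℝ) × (Fin s → ℝ))
    (h1 : ∀ i, x j i < p.1 i) (h2 : ∀ r, 0 < p.2 r) (h3 : ∀ r, p.2 r < y j r) :
    p ∈ interior (FDH x y) := by
  apply mem_interior.mpr
  refine ⟨{q | (∀ i, x j i < q.1 i) ∧ ∀ r, 0 < q.2 r ∧ q.2 r < y j r}, ?_, ?_, ?_⟩
  · rintro q ⟨hq1, hq2⟩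
    exact ⟨fun r => (hq2 r).1.le, j, fun i => (hq1 i).le, fun r => (hq2 r).2.le⟩
  · have e : {q : (Fin m → ℝ) × (Fin s → ℝ) |
        (∀ i, x j i < q.1 i) ∧ ∀ r, 0 < q.2 r ∧ q.2 r < y j r} =
        (⋂ i, {q | x j i < q.1 i}) ∩
          ⋂ r, ({q : (Fin m → ℝ) × (Fin s → ℝ) | 0 < q.2 r} ∩ {q | q.2 r < y j r}) := by
      ext q; simp [Set.mem_iInter, forall_and]
    rw [e]
    apply IsOpen.inter
    · exact isOpen_iInter_of_finite fun i =>
        isOpen_lt continuous_const ((continuous_apply i).comp continuous_fst)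
    · exact isOpen_iInter_of_finite fun r =>
        (isOpen_lt continuous_const ((continuous_apply r).comp continuous_snd)).inter
          (isOpen_lt ((continuous_apply r).comp continuous_snd) continuous_const)
  · exact ⟨h1, fun r => ⟨h2 r, h3 r⟩⟩

lemma thetaEff_witness {n m s : ℕ} (x : Fin n → Fin m → ℝ) (y : Fin n → Fin s → ℝ)
    (o : Fin n) (D : Set ℝ) (h1D : (1 : ℝ) ∈ D) (h : thetaEff x y o D < 1) :
    ∃ θ : ℝ, θ < 1 ∧ ∃ j : Fin n, ∃ δ ∈ D,
      (∀ i, δ * x j i ≤ θ * x o i) ∧ (∀ r, y o r ≤ δ * y j r) := by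
  by_contra hc
  push_neg at hc
  have hne : (1 : ℝ) ∈ {θ : ℝ | ∃ j : Fin n, ∃ δ ∈ D,
      (∀ i, δ * x j i ≤ θ * x o i) ∧ (∀ r, y o r ≤ δ * y j r)} :=
    ⟨o, 1, h1D, fun i => le_refl _, fun r => by simp⟩
  have : (1 : ℝ) ≤ thetaEff x y o D := by
    apply le_csInf ⟨1, hne⟩
    rintro θ ⟨j, δ, hδ, hxc, hyc⟩
    by_contra hθ
    push_neg at hθ
    obtain ⟨r, hr⟩ := hc θ hθ j δ hδ hxc
    linarith [hyc r]
  linarith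

lemma eff_kill {n m s : ℕ} (hm : 0 < m) (x : Fin n → Fin m → ℝ) (y : Fin n → Fin s → ℝ)
    (hx : ∀ j i, 0 < x j i) (hy : ∀ j r, 0 < y j r)
    (o : Fin n) (heff : FDHEfficient x y o) (j : Fin n) (θ : ℝ) (hθ : θ < 1)
    (hxc : ∀ i, x j i ≤ θ * x o i) (hyc : ∀ r, y o r ≤ y j r) : False := by
  apply heff
  refine ⟨((fun i => θ * x o i), (fun r => y o r)), ⟨fun r => (hy o r).le, j, hxc, hyc⟩,
    fun i => ?_, fun r => le_refl _, fun h => ?_⟩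
  · show θ * x o i ≤ x o i
    nlinarith [hx o i]
  · have := congrFun (congrArg Prod.fst h) ⟨0, hm⟩
    simp only at this
    nlinarith [hx o ⟨0, hm⟩]

lemma interior_of_bounds {n m s : ℕ} (x : Fin n → Fin m → ℝ) (y : Fin n → Fin s → ℝ)
    (hx : ∀ j i, 0 < x j i) (hy : ∀ j r, 0 < y j r) (o j : Fin n) (θ δ δ' : ℝ)
    (hδ0 : 0 < δ) (hδ'0 : 0 < δ')
    (hxc : ∀ i, δ * x j i ≤ θ * x o i) (hyc : ∀ r, y o r ≤ δ * y j r)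
    (hl : θ / δ < δ') (hu : δ' < 1 / δ) :
    ((fun i => δ' * x o i), (fun r => δ' * y o r)) ∈ interior (FDH x y) := by
  apply mem_interior_FDH' x y j
  · intro i
    have h1 : x j i ≤ θ / δ * x o i := by
      rw [div_mul_eq_mul_div, le_div_iff₀ hδ0]; nlinarith [hxc i]
    have h2 := mul_lt_mul_of_pos_right hl (hx o i)
    simpa using lt_of_le_of_lt h1 h2
  · intro r; exact mul_pos hδ'0 (hy o r)
  · intro r
    have h1 : 1 / δ * y o r ≤ y j r := by
      rw [div_mul_eq_mul_div, div_le_iff₀ hδ0]; nlinarith [hyc r]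
    have h2 := mul_lt_mul_of_pos_right hu (hy o r)
    simpa using lt_of_lt_of_le h2 h1

/-- if G-SCRS prevails at the FDH_V-efficient DMU_o, then both
Right-IRS and Left-DRS prevail at it. -/
theorem stmt19 {n m s : ℕ} (hm : 0 < m) (hs : 0 < s)
    (x : Fin n → Fin m → ℝ) (y : Fin n → Fin s → ℝ)
    (hx : ∀ j i, 0 < x j i) (hy : ∀ j r, 0 < y j r)
    (o : Fin n) (heff : FDHEfficient x y o) (hgscrs : GSCRS x y o) :
    (∃ δ : ℝ, 1 < δ ∧
      ((fun i => δ * x o i), (fun r => δ * y o r)) ∈ interior (FDH x y)) ∧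
    (∃ δ : ℝ, 0 < δ ∧ δ < 1 ∧
      ((fun i => δ * x o i), (fun r => δ * y o r)) ∈ interior (FDH x y)) := by
  obtain ⟨hCI, hIN, hND⟩ := hgscrs
  constructor
  · -- Right-IRS from θ^NI < 1
    have hNI : thetaEff x y o (Icc 0 1) < 1 := by rw [hIN]; exact hND
    obtain ⟨θ, hθ, j, δ, hδmem, hxc, hyc⟩ :=
      thetaEff_witness x y o (Icc 0 1) ⟨zero_le_one, le_refl 1⟩ hNI
    have hδ0 : 0 < δ := by
      nlinarith [hyc ⟨0, hs⟩, hy o ⟨0, hs⟩, hy j ⟨0, hs⟩]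
    have hθ0 : 0 < θ := by
      nlinarith [hxc ⟨0, hm⟩, mul_pos hδ0 (hx j ⟨0, hm⟩), hx o ⟨0, hm⟩]
    rcases eq_or_lt_of_le hδmem.2 with he | hδlt
    · exact (eff_kill hm x y hx hy o heff j θ hθ
        (fun i => by have := hxc i; rw [he] at this; linarith)
        (fun r => by have := hyc r; rw [he] at this; linarith)).elim
    · have h1δ : 1 < 1 / δ := by rw [lt_div_iff₀ hδ0]; linarith
      have hθδ : θ / δ < 1 / δ := by rw [div_lt_div_iff₀ hδ0 hδ0]; nlinarith
      have hmax : max 1 (θ / δ) < 1 / δ := max_lt h1δ hθδ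
      refine ⟨(max 1 (θ / δ) + 1 / δ) / 2, ?_, ?_⟩
      · have := le_max_left 1 (θ / δ); linarith
      · refine interior_of_bounds x y hx hy o j θ δ _ hδ0 ?_ hxc hyc ?_ ?_
        · have := le_max_left 1 (θ / δ); linarith
        · have := le_max_right 1 (θ / δ); linarith
        · linarith
  · -- Left-DRS from θ^ND < 1
    obtain ⟨θ, hθ, j, δ, hδmem, hxc, hyc⟩ :=
      thetaEff_witness x y o (Ici 1) (mem_Ici.mpr le_rfl) hND
    have hδ1 : 1 ≤ δ := hδmem
    have hδ0 : 0 < δ := by linarith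
    have hθ0 : 0 < θ := by
      nlinarith [hxc ⟨0, hm⟩, mul_pos hδ0 (hx j ⟨0, hm⟩), hx o ⟨0, hm⟩]
    rcases eq_or_lt_of_le hδ1 with he | hδgt
    · exact (eff_kill hm x y hx hy o heff j θ hθ
        (fun i => by have := hxc i; rw [← he] at this; linarith)
        (fun r => by have := hyc r; rw [← he] at this; linarith)).elim
    · have hθδ : θ / δ < 1 / δ := by rw [div_lt_div_iff₀ hδ0 hδ0]; nlinarith
      have hpos : 0 < θ / δ := div_pos hθ0 hδ0
      have h1δ : 1 / δ < 1 := (div_lt_one hδ0).mpr hδgt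
      refine ⟨(θ / δ + 1 / δ) / 2, by linarith, by linarith, ?_⟩
      exact interior_of_bounds x y hx hy o j θ δ _ hδ0 (by linarith) hxc hyc
        (by linarith) (by linarith)
end
end
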